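/- Let S be a perfect commutative ring of characteristic p (the Frobenius x ↦ x^p is bijective) and let f ∈ S be a nonzerodivisor. Then the tilt of S/f, namely the inverse limit of S/f along the Frobenius map, is canonically isomorphic to the f-adic completion of S: lim_{φ} S/f ≅ lim_n S/(f^n). -/

import Mathlib

open Ideal

section Aux

variable (p : ℕ) [Fact p.Prime] {S : Type*} [CommRing S] [CharP S p] [PerfectRing S p]

/-- Inverse of the `n`-th iterate of Frobenius, as a ring hom. -/
noncomputable def psi (n : ℕ) : S →+* S :=
  (((frobeniusEquiv S p).symm : S →+* S)) ^ n

lemma psi_apply (n : ℕ) (x : S) : psi p n x = ((frobeniusEquiv S p).symm)^[n] x := by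
  simp [psi]

lemma psi_pow (n : ℕ) (x : S) : psi p n x ^ p ^ n = x := by
  induction n with
  | zero => simp [psi_apply]
  | succ n ih =>
    rw [psi_apply, Function.iterate_succ_apply', pow_succ', pow_mul, ← psi_apply,
      frobeniusEquiv_symm_pow_p, psi_apply, ← psi_apply, ih]

lemma psi_pow_apply (n : ℕ) (x : S) : psi p n (x ^ p ^ n) = x := by
  induction n with
  | zero => simp [psi_apply]
  | succ n ih =>
    rw [pow_succ, pow_mul, psi_apply, Function.iterate_succ_apply, ← psi_apply]
    rw [show (frobeniusEquiv S p).symm ((x ^ p ^ n) ^ p) = x ^ p ^ n from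
      frobeniusEquiv_symm_apply_frobenius S p _, ih]

lemma psi_injective (n : ℕ) : Function.Injective (psi p n (S := S)) := by
  intro a b h
  have := congrArg (fun z => z ^ p ^ n) h
  simpa [psi_pow] using this

lemma psi_surjective (n : ℕ) : Function.Surjective (psi p n (S := S)) := by
  intro a
  exact ⟨a ^ p ^ n, psi_pow_apply p n a⟩

lemma psi_succ_pow (n : ℕ) (x : S) : psi p (n + 1) x ^ p = psi p n x := by
  rw [psi_apply, Function.iterate_succ_apply', frobeniusEquiv_symm_pow_p, psi_apply]

end Aux

section Main

variable (p : ℕ) [Fact p.Prime] {S : Type*} [CommRing S] [CharP S p] [PerfectRing S p]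
  (f : S) [CharP (S ⧸ Ideal.span {f}) p]

/-- the map `S → S⧸(f)`, `x ↦ φ⁻ⁿ x mod f`. -/
noncomputable def qhom (n : ℕ) : S →+* S ⧸ Ideal.span {f} :=
  (Ideal.Quotient.mk (Ideal.span {f})).comp (psi p n)

lemma qhom_eq_zero_iff (n : ℕ) (a : S) :
    qhom p f n a = 0 ↔ a ∈ Ideal.span {f ^ p ^ n} := by
  rw [qhom, RingHom.comp_apply, Ideal.Quotient.eq_zero_iff_mem, Ideal.mem_span_singleton,
    Ideal.mem_span_singleton]
  constructor
  · rintro ⟨c, hc⟩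
    obtain ⟨b, rfl⟩ := psi_surjective p n c
    refine ⟨b, psi_injective p n ?_⟩
    rw [hc, _root_.map_mul, psi_pow_apply]
  · rintro ⟨b, rfl⟩
    exact ⟨psi p n b, by rw [_root_.map_mul, psi_pow_apply]⟩

/-- The key component map `AdicCompletion (span {f}) S →+* S ⧸ span {f}`. -/
noncomputable def chom (n : ℕ) : AdicCompletion (Ideal.span {f}) S →+* S ⧸ Ideal.span {f} :=
  ((Ideal.Quotient.lift (Ideal.span {f ^ p ^ n}) (qhom p f n)
      (fun a ha => (qhom_eq_zero_iff p f n a).mpr ha)).comp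
    (Ideal.quotEquivOfEq (Ideal.span_singleton_pow f (p ^ n)) : _ →+* _)).comp
    (AdicCompletion.evalₐ (Ideal.span {f}) (p ^ n)).toRingHom

lemma chom_mk (n : ℕ) (y : AdicCompletion.AdicCauchySequence (Ideal.span {f}) S) :
    chom p f n (AdicCompletion.mk _ _ y) =
      Ideal.Quotient.mk (Ideal.span {f}) (psi p n (y.val (p ^ n))) := by
  simp only [chom, RingHom.comp_apply, AlgHom.toRingHom_eq_coe, AlgHom.coe_toRingHom,
    AdicCompletion.evalₐ_mk]
  erw [Ideal.quotEquivOfEq_mk (Ideal.span_singleton_pow f (p ^ n))]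
  rfl

set_option linter.unusedSectionVars false

lemma smul_top_mem (k : ℕ) (x : S) :
    x ∈ ((Ideal.span {f}) ^ k • ⊤ : Submodule S S) ↔ x ∈ (Ideal.span {f}) ^ k := by
  constructor <;> intro h <;> simpa using h

lemma chom_succ_pow (n : ℕ) (x : AdicCompletion (Ideal.span {f}) S) :
    chom p f (n + 1) x ^ p = chom p f n x := by
  obtain ⟨y, rfl⟩ := AdicCompletion.mk_surjective _ _ x
  rw [chom_mk, chom_mk, ← map_pow, psi_succ_pow]
  rw [Ideal.Quotient.mk_eq_mk_iff_sub_mem]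
  have hc : y.val (p ^ n) ≡ y.val (p ^ (n + 1))
      [SMOD ((Ideal.span {f}) ^ (p ^ n) • ⊤ : Submodule S S)] :=
    y.property (pow_le_pow_right₀ (Fact.out : p.Prime).one_lt.le (Nat.le_succ n))
  have hd : y.val (p ^ (n + 1)) - y.val (p ^ n) ∈ Ideal.span {f ^ p ^ n} := by
    rw [← Ideal.span_singleton_pow]
    exact (smul_top_mem f _ _).mp (SModEq.sub_mem.mp hc.symm)
  obtain ⟨c, hc'⟩ := Ideal.mem_span_singleton.mp hd
  have : psi p n (y.val (p ^ (n + 1))) - psi p n (y.val (p ^ n)) = f * psi p n c := by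
    rw [← _root_.map_sub, hc', _root_.map_mul, psi_pow_apply]
  rw [this]
  exact Ideal.mul_mem_right _ _ (Ideal.mem_span_singleton_self f)

/-- The canonical ring hom from the adic completion to the perfection of `S/f`. -/
noncomputable def PhiHom : AdicCompletion (Ideal.span {f}) S →+*
    Perfection (S ⧸ Ideal.span {f}) p where
  toFun x := ⟨fun n => chom p f n x, fun n => chom_succ_pow p f n x⟩
  map_one' := Subtype.eq <| funext fun n => map_one (chom p f n)
  map_mul' a b := Subtype.eq <| funext fun n => map_mul (chom p f n) a b
  map_zero' := Subtype.eq <| funext fun n => map_zero (chom p f n)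
  map_add' a b := Subtype.eq <| funext fun n => map_add (chom p f n) a b

lemma coeff_PhiHom (n : ℕ) (x : AdicCompletion (Ideal.span {f}) S) :
    Perfection.coeff _ p n (PhiHom p f x) = chom p f n x := rfl

lemma PhiHom_injective : Function.Injective (PhiHom p f) := by
  rw [injective_iff_map_eq_zero]
  intro x hx
  obtain ⟨y, rfl⟩ := AdicCompletion.mk_surjective _ _ x
  have key : ∀ n : ℕ, y.val (p ^ n) ∈ Ideal.span {f ^ p ^ n} := by
    intro n
    have h0 : chom p f n (AdicCompletion.mk _ _ y) = 0 := by
      rw [← coeff_PhiHom, hx, map_zero]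
    rw [chom_mk] at h0
    exact (qhom_eq_zero_iff p f n _).mp h0
  ext n
  show Submodule.mkQ _ (y.val n) = (0 : AdicCompletion (Ideal.span {f}) S).val n
  rw [AdicCompletion.val_zero, Submodule.mkQ_apply, Pi.zero_apply]; erw [Submodule.Quotient.mk_eq_zero]
  have hle : n ≤ p ^ n := (Nat.lt_pow_self (n := n) (Fact.out : p.Prime).one_lt).le
  have h1 : y.val n ≡ y.val (p ^ n)
      [SMOD ((Ideal.span {f}) ^ n • ⊤ : Submodule S S)] := y.property hle
  have h2 : y.val (p ^ n) ∈ ((Ideal.span {f}) ^ n • ⊤ : Submodule S S) := by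
    rw [smul_top_mem]
    refine Ideal.pow_le_pow_right hle ?_
    rw [Ideal.span_singleton_pow]
    exact key n
  have := SModEq.sub_mem.mp h1
  simpa using add_mem this h2

lemma coeff_pow_pow (gP : Perfection (S ⧸ Ideal.span {f}) p) (m k : ℕ) :
    Perfection.coeff _ p (m + k) gP ^ p ^ k = Perfection.coeff _ p m gP := by
  induction k with
  | zero => simp
  | succ k ih =>
    rw [pow_succ', pow_mul, ← ih, ← Nat.add_assoc]
    congr 1
    exact Perfection.coeff_pow_p' gP (m + k)

lemma PhiHom_surjective : Function.Surjective (PhiHom p f) := by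
  intro gP
  have hmk : Function.Surjective (Ideal.Quotient.mk (Ideal.span {f})) :=
    Ideal.Quotient.mk_surjective
  obtain ⟨L, hL⟩ : ∃ L : S ⧸ Ideal.span {f} → S,
      ∀ a, Ideal.Quotient.mk (Ideal.span {f}) (L a) = a :=
    ⟨Function.surjInv hmk, fun a => Function.surjInv_eq hmk a⟩
  set y : ℕ → S := fun m => L (Perfection.coeff _ p m gP) ^ p ^ m with hy
  have hcauchy : ∀ n, y n ≡ y (n + 1) [SMOD ((Ideal.span {f}) ^ n • ⊤ : Submodule S S)] := by
    intro n
    rw [SModEq.sub_mem]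
    rw [smul_top_mem]
    set a := L (Perfection.coeff _ p n gP) with ha
    set b := L (Perfection.coeff _ p (n + 1) gP) ^ p with hb
    have hab : a - b ∈ Ideal.span {f} := by
      rw [← Ideal.Quotient.mk_eq_mk_iff_sub_mem]
      rw [ha, hL, hb, map_pow, hL, Perfection.coeff_pow_p']
    have : y n - y (n + 1) = (a - b) ^ p ^ n := by
      rw [sub_pow_char_pow]
      simp only [hy, ha, hb]
      rw [← pow_mul, ← pow_succ']
    rw [this]
    obtain ⟨c, hc⟩ := Ideal.mem_span_singleton.mp hab
    refine Ideal.pow_le_pow_right (Nat.lt_pow_self (n := n) (Fact.out : p.Prime).one_lt).le ?_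
    rw [Ideal.span_singleton_pow, Ideal.mem_span_singleton, hc, mul_pow]
    exact ⟨c ^ p ^ n, rfl⟩
  refine ⟨AdicCompletion.mk _ _ (AdicCompletion.AdicCauchySequence.mk _ _ y hcauchy), ?_⟩
  apply Perfection.ext
  intro n
  rw [coeff_PhiHom, chom_mk]
  have hle : n ≤ p ^ n := (Nat.lt_pow_self (n := n) (Fact.out : p.Prime).one_lt).le
  have hval : (AdicCompletion.AdicCauchySequence.mk (Ideal.span {f}) S y hcauchy).val (p ^ n)
      = y (p ^ n) := rfl
  rw [hval]
  have hsplit : y (p ^ n) =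
      (L (Perfection.coeff _ p (p ^ n) gP) ^ p ^ (p ^ n - n)) ^ p ^ n := by
    rw [hy, ← pow_mul, ← pow_add, Nat.sub_add_cancel hle]
  rw [hsplit, psi_pow_apply, map_pow, hL]
  have := coeff_pow_pow p f gP n (p ^ n - n)
  rwa [Nat.add_sub_cancel' hle] at this

end Main

/-- For `S` a perfect ring of characteristic `p` and `f` a nonzerodivisor, the tilt of
`S/f` (the inverse limit along Frobenius) is isomorphic to the `f`-adic completion of `S`. -/
theorem stmt2 (p : ℕ) [Fact p.Prime] {S : Type*} [CommRing S] [CharP S p]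
    (hperf : Function.Bijective (fun x : S => x ^ p))
    (f : S) (hf : f ∈ nonZeroDivisors S)
    [CharP (S ⧸ Ideal.span {f}) p] :
    Nonempty ((Perfection (S ⧸ Ideal.span {f}) p) ≃+*
      (AdicCompletion (Ideal.span {f}) S)) := by
  haveI : PerfectRing S p := by
    refine ⟨?_⟩
    have : ⇑(frobenius S p) = fun x : S => x ^ p := funext fun x => frobenius_def ..
    exact hperf
  exact ⟨(RingEquiv.ofBijective (PhiHom p f)
    ⟨PhiHom_injective p f, PhiHom_surjective p f⟩).symm⟩
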